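/- Let K be a compact topological space and let F : K → L¹(ℝ) be continuous, with F(θ)(x) ≥ 0 for Lebesgue-a.e. x for every θ ∈ K. Then sup_{θ∈K} ∫_{{x : F(θ)(x) ≤ ε}} F(θ)(x) dx → 0 as ε → 0+. -/

import Mathlib

open MeasureTheory Real Filter Set Topology

private lemma aux_small {f : ℝ → ℝ} (hf : Integrable f) (hm : Measurable f)
    (hpos : 0 ≤ᵐ[volume] f) {δ : ℝ} (hδ : 0 < δ) :
    ∃ ε > (0:ℝ), ∫ x in {x | f x ≤ 2 * ε}, f x < δ := by
  set g : ℕ → ℝ → ℝ := fun n => ({x | f x ≤ ((n:ℝ)+1)⁻¹}).indicator f with hg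
  have hmeas : ∀ n : ℕ, MeasurableSet {x | f x ≤ ((n:ℝ)+1)⁻¹} := fun n =>
    measurableSet_le hm measurable_const
  have htend : Tendsto (fun n => ∫ x, g n x) atTop (𝓝 (∫ x, ({x : ℝ | f x ≤ 0}).indicator f x)) := by
    apply tendsto_integral_of_dominated_convergence (fun x => |f x|)
    · exact fun n => (hm.stronglyMeasurable.indicator (hmeas n)).aestronglyMeasurable
    · exact hf.abs
    · intro n
      filter_upwards with x
      simpa using norm_indicator_le_norm_self f x
    · filter_upwards with x
      rcases le_or_gt (f x) 0 with h | h
      · have : ∀ n : ℕ, g n x = f x := fun n => by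
          simp only [hg, indicator_apply, mem_setOf_eq]
          rw [if_pos (h.trans (by positivity))]
        simp only [this]
        have : ({x : ℝ | f x ≤ 0}).indicator f x = f x := by
          simp [indicator_apply, mem_setOf_eq, h]
        rw [this]
        exact tendsto_const_nhds
      · have hval : ({x : ℝ | f x ≤ 0}).indicator f x = 0 := by
          simp [indicator_apply, mem_setOf_eq, not_le.2 h]
        rw [hval]
        apply tendsto_const_nhds.congr'
        obtain ⟨n₀, hn₀⟩ := exists_nat_one_div_lt h
        filter_upwards [eventually_ge_atTop n₀] with n hn
        rw [one_div] at hn₀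
        have hle : ((n:ℝ)+1)⁻¹ ≤ ((n₀:ℝ)+1)⁻¹ := by
          gcongr
        have : ((n:ℝ)+1)⁻¹ < f x := lt_of_le_of_lt hle hn₀
        simp [hg, indicator_apply, mem_setOf_eq, not_le.2 this]
  have hzero : ∫ x, ({x : ℝ | f x ≤ 0}).indicator f x = 0 := by
    rw [← integral_zero ℝ ℝ]
    apply integral_congr_ae
    filter_upwards [hpos] with x hx
    rcases le_or_gt (f x) 0 with h | h
    · have : f x = 0 := le_antisymm h hx
      simp [indicator_apply, this]
    · simp [indicator_apply, not_le.2 h]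
  rw [hzero] at htend
  have := (htend.eventually (eventually_lt_nhds hδ)).exists
  obtain ⟨n, hn⟩ := this
  refine ⟨((n:ℝ)+1)⁻¹ / 2, by positivity, ?_⟩
  have : 2 * (((n:ℝ)+1)⁻¹ / 2) = ((n:ℝ)+1)⁻¹ := by ring
  rw [this, ← integral_indicator (hmeas n)]
  exact hn

private lemma aux_pert {f g : ℝ → ℝ} (hf : Integrable f) (hg : Integrable g)
    (hmf : Measurable f) (hmg : Measurable g)
    (hfpos : 0 ≤ᵐ[volume] f) (ε : ℝ) :
    ∫ x in {x | g x ≤ ε}, g x ≤ 3 * (∫ x, |f x - g x|) + ∫ x in {x | f x ≤ 2*ε}, f x := by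
  set A : Set ℝ := {x | g x ≤ ε} with hA
  set B : Set ℝ := {x | f x ≤ 2*ε} with hB
  have hAm : MeasurableSet A := measurableSet_le hmg measurable_const
  have hBm : MeasurableSet B := measurableSet_le hmf measurable_const
  have habs : Integrable (fun x => |f x - g x|) := (hf.sub hg).abs
  have step1 : ∫ x in A, g x ≤ (∫ x in A, |f x - g x|) + ∫ x in A, f x := by
    rw [← integral_add habs.integrableOn hf.integrableOn]
    apply setIntegral_mono hg.integrableOn (habs.integrableOn.add hf.integrableOn)
    intro x
    have := abs_nonneg (f x - g x)
    have := neg_abs_le (f x - g x)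
    dsimp
    linarith
  have step2 : ∫ x in A, |f x - g x| ≤ ∫ x, |f x - g x| :=
    setIntegral_le_integral habs (Eventually.of_forall fun x => abs_nonneg _)
  have split : ∫ x in A, f x = (∫ x in A ∩ B, f x) + ∫ x in A \ B, f x :=
    (integral_inter_add_diff hBm hf.integrableOn).symm
  have step3 : ∫ x in A ∩ B, f x ≤ ∫ x in B, f x := by
    apply setIntegral_mono_set hf.integrableOn (ae_restrict_of_ae hfpos)
    exact HasSubset.Subset.eventuallyLE inter_subset_right
  have step4 : ∫ x in A \ B, f x ≤ ∫ x in A \ B, 2 * |f x - g x| := by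
    apply setIntegral_mono_on hf.integrableOn
      ((habs.const_mul 2).integrableOn) (hAm.diff hBm)
    intro x hx
    obtain ⟨hxA, hxB⟩ := hx
    have h1 : g x ≤ ε := hxA
    have h2 : 2 * ε < f x := not_le.1 hxB
    have : f x - g x ≤ |f x - g x| := le_abs_self _
    linarith
  have step5 : ∫ x in A \ B, 2 * |f x - g x| ≤ 2 * ∫ x, |f x - g x| := by
    rw [integral_const_mul]
    gcongr
    exact Eventually.of_forall fun x => abs_nonneg _
    exact Measure.restrict_le_self
  linarith

/-- If `K` is compact and `F : K → L¹(ℝ)` is continuous with `F θ ≥ 0` a.e. for each `θ`,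
then `sup_{θ ∈ K} ∫_{{F θ ≤ ε}} F θ → 0` as `ε → 0+`. -/
theorem statement15 (K : Type*) [TopologicalSpace K] [CompactSpace K]
    (F : K → Lp ℝ 1 (volume : Measure ℝ)) (hF : Continuous F)
    (hpos : ∀ θ : K, 0 ≤ᵐ[volume] (F θ : ℝ → ℝ)) :
    ∀ δ > (0 : ℝ), ∀ᶠ ε in 𝓝[>] (0 : ℝ), ∀ θ : K,
      ∫ x in {x : ℝ | (F θ : ℝ → ℝ) x ≤ ε}, (F θ : ℝ → ℝ) x < δ := by
  intro δ hδ
  by_cases hK : Nonempty K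
  swap
  · filter_upwards with ε θ
    exact absurd ⟨θ⟩ hK
  have hint : ∀ θ : K, Integrable ((F θ : ℝ → ℝ)) := fun θ => L1.integrable_coeFn (F θ)
  have hmeas : ∀ θ : K, Measurable ((F θ : ℝ → ℝ)) := fun θ =>
    (Lp.stronglyMeasurable (F θ)).measurable
  have key : ∀ θ : K, ∃ e > (0:ℝ),
      ∫ x in {x | (F θ : ℝ → ℝ) x ≤ 2 * e}, (F θ : ℝ → ℝ) x < δ/2 :=
    fun θ => aux_small (hint θ) (hmeas θ) (hpos θ) (by positivity)
  choose e he hi using key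
  obtain ⟨t, ht⟩ := IsCompact.elim_finite_subcover (isCompact_univ (X := K))
    (fun θ => F ⁻¹' Metric.ball (F θ) (δ/6))
    (fun θ => Metric.isOpen_ball.preimage hF)
    (fun θ _ => mem_iUnion.2 ⟨θ, by simp [Metric.mem_ball]; positivity⟩)
  have htne : t.Nonempty := by
    rcases hK with ⟨θ₀⟩
    have := ht (mem_univ θ₀)
    simp only [mem_iUnion] at this
    obtain ⟨i, hit, _⟩ := this
    exact ⟨i, hit⟩
  set ε₀ := t.inf' htne e with hε₀def
  have hε₀ : 0 < ε₀ := by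
    rw [hε₀def, Finset.lt_inf'_iff]
    exact fun i _ => he i
  filter_upwards [Ioc_mem_nhdsGT hε₀] with ε hε θ
  have := ht (mem_univ θ)
  simp only [mem_iUnion] at this
  obtain ⟨i, hit, hθi⟩ := this
  have hdist : ∫ x, |(F i : ℝ → ℝ) x - (F θ : ℝ → ℝ) x| < δ/6 := by
    have h1 : dist (F i) (F θ) = ∫ x, dist ((F i : ℝ → ℝ) x) ((F θ : ℝ → ℝ) x) :=
      L1.dist_eq_integral_dist (F i) (F θ)
    have h2 : dist (F θ) (F i) < δ/6 := by
      simpa [Metric.mem_ball] using hθi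
    rw [dist_comm] at h2
    rw [h1] at h2
    simpa [Real.dist_eq] using h2
  have hpert := aux_pert (hint i) (hint θ) (hmeas i) (hmeas θ) (hpos i) ε
  have hmono : ∫ x in {x | (F i : ℝ → ℝ) x ≤ 2*ε}, (F i : ℝ → ℝ) x ≤
      ∫ x in {x | (F i : ℝ → ℝ) x ≤ 2 * e i}, (F i : ℝ → ℝ) x := by
    apply setIntegral_mono_set (hint i).integrableOn (ae_restrict_of_ae (hpos i))
    apply HasSubset.Subset.eventuallyLE
    intro x hx
    have : ε ≤ e i := hε.2.trans (Finset.inf'_le e hit)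
    simp only [mem_setOf_eq] at hx ⊢
    linarith
  have := hi i
  linarith
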